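/- Let p be a positive integer, β > p, β₀ = β/p not an odd integer, and u₀ = (β₀ - {β₀}₂)/2. Then for every nonzero integer u with |u| ≥ u₀ and u ≠ ±u₀, U_β maps the fundamental interval I_u = (β/(2u+1), β/(2u-1)) onto (-p, p), while the edge fundamental intervals are I_{u₀} = (β/(2u₀+1), p) and I_{-u₀} = (-p, -β/(2u₀+1)). -/

import Mathlib

/-- The signed fractional part `{t}₂`: the unique element of `(-1, 1]` with `t - {t}₂ ∈ 2ℤ`. -/
noncomputable def fract2 (t : ℝ) : ℝ := t - 2 * ⌈(t - 1) / 2⌉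

/-- The Gauss-type map `U_β(x) = p·{-β/x}₂`, with `U_β(0) = 0`. -/
noncomputable def Ubeta (p β : ℝ) (x : ℝ) : ℝ := if x = 0 then 0 else p * fract2 (-β / x)

lemma fract2_bounds (t : ℝ) : -1 < fract2 t ∧ fract2 t ≤ 1 := by
  unfold fract2
  have h1 := Int.ceil_lt_add_one ((t - 1) / 2)
  have h2 := Int.le_ceil ((t - 1) / 2)
  constructor <;> linarith

lemma img_div (β c d : ℝ) (hβ : 0 < β) (h : c < d) (hs : 0 < c ∨ d < 0) :
    (fun x => β / x) '' Set.Ioo (β / d) (β / c) = Set.Ioo c d := by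
  ext y
  simp only [Set.mem_image, Set.mem_Ioo]
  constructor
  · rintro ⟨x, ⟨h1, h2⟩, rfl⟩
    rcases hs with hc | hd
    · have hd0 : 0 < d := lt_trans hc h
      have hx : 0 < x := lt_trans (div_pos hβ hd0) h1
      have e1 : x * c < β := (lt_div_iff₀ hc).1 h2
      have e2 : β < x * d := (div_lt_iff₀ hd0).1 h1
      constructor
      · rw [lt_div_iff₀ hx]; nlinarith
      · rw [div_lt_iff₀ hx]; nlinarith
    · have hc0 : c < 0 := lt_trans h hd
      have hx : x < 0 := lt_trans h2 (div_neg_of_pos_of_neg hβ hc0)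
      have e1 : β < x * c := (lt_div_iff_of_neg hc0).1 h2
      have e2 : x * d < β := (div_lt_iff_of_neg hd).1 h1
      constructor
      · rw [lt_div_iff_of_neg hx]; nlinarith
      · rw [div_lt_iff_of_neg hx]; nlinarith
  · rintro ⟨h1, h2⟩
    have hy0 : y ≠ 0 := by
      rcases hs with hc | hd
      · exact ne_of_gt (lt_trans hc h1)
      · exact ne_of_lt (lt_trans h2 hd)
    refine ⟨β / y, ⟨?_, ?_⟩, by rw [div_div_cancel₀ (ne_of_gt hβ)]⟩
    · rcases hs with hc | hd
      · exact div_lt_div_of_pos_left hβ (lt_trans hc h1) h2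
      · have hy : y < 0 := lt_trans h2 hd
        rw [lt_div_iff_of_neg hy, div_mul_eq_mul_div, lt_div_iff_of_neg hd]
        nlinarith
    · rcases hs with hc | hd
      · exact div_lt_div_of_pos_left hβ hc h1
      · have hy : y < 0 := lt_trans h2 hd
        have hc0 : c < 0 := lt_trans h hd
        rw [div_lt_iff_of_neg hy, div_mul_eq_mul_div, div_lt_iff_of_neg hc0]
        nlinarith

lemma part1 (p β : ℝ) (hp : 0 < p) (hβ : 0 < β) (u : ℤ) (hu : u ≠ 0) :
    Ubeta p β '' Set.Ioo (β / (2 * (u : ℝ) + 1)) (β / (2 * (u : ℝ) - 1))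
      = Set.Ioo (-p) p := by
  set c : ℝ := 2 * (u : ℝ) - 1 with hc
  set d : ℝ := 2 * (u : ℝ) + 1 with hd
  have hcd : c < d := by rw [hc, hd]; linarith
  have hs : 0 < c ∨ d < 0 := by
    rcases lt_or_gt_of_ne hu with h | h
    · right
      have : (u : ℝ) ≤ -1 := by exact_mod_cast Int.le_sub_one_of_lt h
      rw [hd]; linarith
    · left
      have : (1 : ℝ) ≤ (u : ℝ) := by exact_mod_cast h
      rw [hc]; linarith
  have himg := img_div β c d hβ hcd hs
  have hUb : ∀ x ∈ Set.Ioo (β / d) (β / c),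
      Ubeta p β x = p * (2 * (u : ℝ) - β / x) := by
    intro x hx
    have hmem : β / x ∈ Set.Ioo c d := himg ▸ Set.mem_image_of_mem _ hx
    obtain ⟨hm1, hm2⟩ := hmem
    have hx0 : x ≠ 0 := by
      rintro rfl
      rw [div_zero] at hm1 hm2
      rcases hs with h | h <;> linarith
    rw [Ubeta, if_neg hx0]
    have hceil : ⌈(-β / x - 1) / 2⌉ = -u := by
      rw [Int.ceil_eq_iff]
      rw [neg_div]
      push_cast
      constructor <;> [skip; skip] <;> rw [hc] at hm1 <;> rw [hd] at hm2 <;>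
        [linarith [hm2]; linarith [hm1]]
    rw [fract2, hceil]
    push_cast
    rw [neg_div]
    ring
  rw [Set.image_congr hUb,
    show (fun x => p * (2 * (u : ℝ) - β / x))
      = (fun y => p * (2 * (u : ℝ) - y)) ∘ (fun x => β / x) from rfl,
    Set.image_comp, himg]
  ext z
  simp only [Set.mem_image, Set.mem_Ioo]
  constructor
  · rintro ⟨y, ⟨hy1, hy2⟩, rfl⟩
    rw [hc] at hy1; rw [hd] at hy2
    constructor <;> nlinarith
  · rintro ⟨h1, h2⟩
    have hz1 : -1 < z / p := by rw [lt_div_iff₀ hp]; linarith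
    have hz2 : z / p < 1 := by rw [div_lt_iff₀ hp]; linarith
    refine ⟨2 * (u : ℝ) - z / p, ⟨?_, ?_⟩, ?_⟩
    · rw [hc]; linarith
    · rw [hd]; linarith
    · field_simp; ring

theorem Ubeta_filling_and_edge_intervals (p : ℕ) (hp : 0 < p) (β : ℝ) (hβ : (p : ℝ) < β)
    (hodd : ¬ ∃ k : ℤ, β / p = 2 * (k : ℝ) + 1)
    (u₀ : ℝ) (hu₀ : u₀ = (β / p - fract2 (β / p)) / 2) :
    (∀ u : ℤ, u ≠ 0 → u₀ ≤ |(u : ℝ)| → (u : ℝ) ≠ u₀ → (u : ℝ) ≠ -u₀ →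
      Ubeta p β '' Set.Ioo (β / (2 * (u : ℝ) + 1)) (β / (2 * (u : ℝ) - 1))
        = Set.Ioo (-(p : ℝ)) p) ∧
    Set.Ioo (β / (2 * u₀ + 1)) (β / (2 * u₀ - 1)) ∩ Set.Ioo (-(p : ℝ)) p
      = Set.Ioo (β / (2 * u₀ + 1)) (p : ℝ) ∧
    Set.Ioo (β / (2 * (-u₀) + 1)) (β / (2 * (-u₀) - 1)) ∩ Set.Ioo (-(p : ℝ)) p
      = Set.Ioo (-(p : ℝ)) (-(β / (2 * u₀ + 1))) := by
  have hp' : (0 : ℝ) < p := by exact_mod_cast hp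
  have hβ0 : 0 < β := lt_trans hp' hβ
  set β₀ : ℝ := β / p with hβ₀def
  have hβ₀ : 1 < β₀ := (one_lt_div hp').2 hβ
  have hf := fract2_bounds β₀
  have hf3 : fract2 β₀ ≠ 1 := by
    intro hone
    apply hodd
    refine ⟨⌈(β₀ - 1) / 2⌉, ?_⟩
    have : β₀ - 2 * ⌈(β₀ - 1) / 2⌉ = 1 := hone
    linarith
  have hf1 : -1 < fract2 β₀ := hf.1
  have hf2 : fract2 β₀ < 1 := lt_of_le_of_ne hf.2 hf3
  have hu₀ceil : u₀ = (⌈(β₀ - 1) / 2⌉ : ℝ) := by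
    rw [hu₀, fract2]; ring
  have hu₀1 : 1 ≤ u₀ := by
    rw [hu₀ceil]
    have : 0 < ⌈(β₀ - 1) / 2⌉ := Int.ceil_pos.2 (by linarith)
    exact_mod_cast this
  have h2u : 2 * u₀ = β₀ - fract2 β₀ := by rw [hu₀]; ring
  have hβeq : β = p * β₀ := by rw [hβ₀def]; field_simp
  have hlow : 0 < 2 * u₀ - 1 := by linarith
  have hAp : β / (2 * u₀ + 1) < p := by
    rw [div_lt_iff₀ (by linarith : (0:ℝ) < 2 * u₀ + 1)]
    nlinarith
  have hA0 : 0 < β / (2 * u₀ + 1) := div_pos hβ0 (by linarith)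
  have hBp : (p : ℝ) < β / (2 * u₀ - 1) := by
    rw [lt_div_iff₀ hlow]
    nlinarith
  refine ⟨fun u hu _ _ _ => part1 p β hp' hβ0 u hu, ?_, ?_⟩
  · rw [Set.Ioo_inter_Ioo, max_eq_left (by linarith), min_eq_right (le_of_lt hBp)]
  · have e1 : β / (2 * (-u₀) + 1) = -(β / (2 * u₀ - 1)) := by
      rw [show 2 * (-u₀) + 1 = -(2 * u₀ - 1) by ring, div_neg]
    have e2 : β / (2 * (-u₀) - 1) = -(β / (2 * u₀ + 1)) := by
      rw [show 2 * (-u₀) - 1 = -(2 * u₀ + 1) by ring, div_neg]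
    rw [e1, e2, Set.Ioo_inter_Ioo, max_eq_right (by linarith),
      min_eq_left (by linarith)]
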